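/- The quasi-shuffle product identity: for any finite sequence x in R^d and any functionals ℓ_1, ℓ_2 given as words in basis vectors (ℓ = e_{i_1}|...|e_{i_m} pairing with Φ via ⟨ℓ, Φ(x)⟩ = Σ_{k_1<...<k_m} ⟨e_{i_1},x_{k_1}⟩⋯⟨e_{i_m},x_{k_m}⟩), the pointwise product satisfies ⟨ℓ_1, Φ(x)⟩ · ⟨ℓ_2, Φ(x)⟩ = ⟨ℓ_1 ⋆ ℓ_2, Φ(x^⋆)⟩, where ⋆ is defined inductively by (ℓ_1|e_i) ⋆ (ℓ_2|e_j) = (ℓ_1|e_i ⋆ ℓ_2)|e_j + (ℓ_1 ⋆ ℓ_2|e_j)|e_i + (ℓ_1 ⋆ ℓ_2)|(e_i ⊗ e_j), with e_i ⊗ e_j pairing as ⟨e_i⊗e_j, x_k⟩ = ⟨e_i, x_k⟩⟨e_j, x_k⟩. -/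

import Mathlib

/- A "letter" is a finite tensor product of basis vectors e_{i₁} ⊗ ... ⊗ e_{i_r},
represented by the list [i₁,...,i_r] (it pairs with a vector v by ∏ v_{i_j});
a "word" is a list of letters; a formal sum of words (all coefficients 1,
with multiplicity) is represented by a list of words. -/
abbrev Letter (d : ℕ) := List (Fin d)
abbrev Word (d : ℕ) := List (Letter d)

/-- Pairing of a word with Φ(x^⋆):
⟨a₁|...|a_m, Φ(x^⋆)⟩ = Σ_{1≤k₁<...<k_m≤L} ∏_r ⟨a_r, x_{k_r}⟩,
where ⟨e_{i₁}⊗...⊗e_{i_r}, v⟩ = v_{i₁} ⋯ v_{i_r}. -/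
def pairW {d : ℕ} (x : List (Fin d → ℝ)) (w : Word d) : ℝ :=
  ∑ f ∈ Finset.univ.filter
      (fun f : Fin w.length → Fin x.length => ∀ a b, a < b → f a < f b),
    ∏ r, ((w.get r).map (x.get (f r))).prod

/-- The quasi-shuffle product on words, written on reversed words so that the
inductive rule (ℓ₁|e_i) ⋆ (ℓ₂|e_j) = (ℓ₁|e_i ⋆ ℓ₂)|e_j + (ℓ₁ ⋆ ℓ₂|e_j)|e_i
+ (ℓ₁ ⋆ ℓ₂)|(e_i ⊗ e_j) becomes head recursion; the empty word is the unit. -/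
def qshRev {d : ℕ} : Word d → Word d → List (Word d)
  | [], w => [w]
  | a :: w1, [] => [a :: w1]
  | a :: w1, b :: w2 =>
      ((qshRev (a :: w1) w2).map (fun w => b :: w)) ++
      ((qshRev w1 (b :: w2)).map (fun w => a :: w)) ++
      ((qshRev w1 w2).map (fun w => (a ++ b) :: w))
  termination_by w1 w2 => w1.length + w2.length

/-- The quasi-shuffle product ℓ₁ ⋆ ℓ₂ as a formal sum (list) of words. -/
def qsh {d : ℕ} (w1 w2 : Word d) : List (Word d) :=
  (qshRev w1.reverse w2.reverse).map List.reverse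


def Q {d : ℕ} : List (Fin d → ℝ) → Word d → ℝ
  | _, [] => 1
  | [], _ :: _ => 0
  | y :: xs, a :: w => Q xs (a :: w) + (a.map y).prod * Q xs w

lemma Q_nil_word {d : ℕ} (xs : List (Fin d → ℝ)) : Q xs [] = 1 := by cases xs <;> rfl

lemma Q_cons {d : ℕ} (y : Fin d → ℝ) (xs : List (Fin d → ℝ)) (c : Letter d) (w : Word d) :
    Q (y :: xs) (c :: w) = Q xs (c :: w) + (c.map y).prod * Q xs w := rfl

lemma Q_nil_ne {d : ℕ} (w : Word d) (h : w ≠ []) : Q ([] : List (Fin d → ℝ)) w = 0 := by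
  cases w with
  | nil => exact absurd rfl h
  | cons a t => rfl

lemma Q_append {d : ℕ} (x : List (Fin d → ℝ)) (y : Fin d → ℝ) :
    ∀ (w : Word d) (c : Letter d),
    Q (x ++ [y]) (w ++ [c]) = Q x (w ++ [c]) + Q x w * (c.map y).prod := by
  induction x with
  | nil =>
    intro w c
    cases w with
    | nil =>
      simp only [List.nil_append]
      rw [Q_cons, Q_nil_word, Q_nil_ne [c] (by simp)]
      ring
    | cons b w' =>
      simp only [List.cons_append, List.nil_append]
      rw [Q_cons, Q_nil_ne (b :: (w' ++ [c])) (by simp), Q_nil_ne (w' ++ [c]) (by simp),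
        Q_nil_ne (b :: w') (by simp)]
      ring
  | cons z x' ih =>
    intro w c
    cases w with
    | nil =>
      simp only [List.nil_append, List.cons_append]
      have h1 := ih [] c
      simp only [List.nil_append] at h1
      rw [Q_cons, h1, Q_cons]
      simp only [Q_nil_word]
      ring
    | cons b w' =>
      simp only [List.cons_append]
      have h1 := ih (b :: w') c
      simp only [List.cons_append] at h1
      rw [Q_cons, h1, ih w' c, Q_cons, Q_cons]
      ring

lemma Q_rev {d : ℕ} (x : List (Fin d → ℝ)) : ∀ w : Word d, Q x.reverse w.reverse = Q x w := by
  induction x using List.reverseRecOn with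
  | nil =>
    intro w
    cases w with
    | nil => rfl
    | cons b w' =>
      rw [show Q ([] : List (Fin d → ℝ)) (b :: w') = 0 from rfl]
      rcases List.exists_cons_of_ne_nil (by simp : (b :: w').reverse ≠ []) with ⟨hd, tl, h⟩
      simp only [List.reverse_nil, h]
      rfl
  | append_singleton x' y ih =>
    intro w
    induction w using List.reverseRecOn with
    | nil => simp [Q_nil_word]
    | append_singleton w' c _ =>
      rw [List.reverse_append, List.reverse_append]
      simp only [List.reverse_singleton, List.singleton_append]
      rw [Q_cons, Q_append]
      have h1 := ih (w' ++ [c])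
      have h2 := ih w'
      rw [List.reverse_append, List.reverse_singleton, List.singleton_append] at h1
      rw [h1, h2]
      ring


lemma sum_map_cons_Q {d : ℕ} (y : Fin d → ℝ) (xs : List (Fin d → ℝ)) (c : Letter d)
    (l : List (Word d)) :
    ((l.map (fun w => c :: w)).map (fun w => Q (y :: xs) w)).sum
      = (l.map (fun w => Q xs (c :: w))).sum + (c.map y).prod * (l.map (fun w => Q xs w)).sum := by
  induction l with
  | nil => simp
  | cons hd tl ih =>
    simp only [List.map_cons, List.sum_cons, ih, Q_cons]
    ring

lemma main_id {d : ℕ} (xs : List (Fin d → ℝ)) :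
    ∀ v1 v2 : Word d, ((qshRev v1 v2).map (fun w => Q xs w)).sum = Q xs v1 * Q xs v2 := by
  induction xs with
  | nil =>
    intro v1 v2
    match v1, v2 with
    | [], v2 => simp [qshRev, Q_nil_word]
    | a :: t1, [] => simp [qshRev, Q_nil_word]
    | a :: t1, b :: t2 =>
      rw [show Q ([] : List (Fin d → ℝ)) (a :: t1) = 0 from rfl,
        show Q ([] : List (Fin d → ℝ)) (b :: t2) = 0 from rfl]
      rw [qshRev, mul_zero]
      apply List.sum_eq_zero
      intro r hr
      obtain ⟨w, hw, rfl⟩ := List.mem_map.mp hr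
      rcases List.mem_append.mp hw with hw' | hw'
      · rcases List.mem_append.mp hw' with h | h
        · obtain ⟨u, _, rfl⟩ := List.mem_map.mp h
          rfl
        · obtain ⟨u, _, rfl⟩ := List.mem_map.mp h
          rfl
      · obtain ⟨u, _, rfl⟩ := List.mem_map.mp hw'
        rfl
  | cons y xr ih =>
    intro v1 v2
    match v1, v2 with
    | [], v2 => simp [qshRev, Q_nil_word]
    | a :: t1, [] => simp [qshRev, Q_nil_word]
    | a :: t1, b :: t2 =>
      rw [qshRev]
      simp only [List.map_append, List.sum_append]
      rw [sum_map_cons_Q, sum_map_cons_Q, sum_map_cons_Q]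
      have key : (((qshRev (a :: t1) t2).map (fun w => Q xr (b :: w))).sum
          + ((qshRev t1 (b :: t2)).map (fun w => Q xr (a :: w))).sum)
          + ((qshRev t1 t2).map (fun w => Q xr ((a ++ b) :: w))).sum
          = Q xr (a :: t1) * Q xr (b :: t2) := by
        rw [← ih (a :: t1) (b :: t2), qshRev]
        simp only [List.map_append, List.sum_append, List.map_map, Function.comp_def]
      rw [Q_cons, Q_cons]
      have e1 := ih (a :: t1) t2
      have e2 := ih t1 (b :: t2)
      have e3 := ih t1 t2
      have hab : ((a ++ b).map y).prod = (a.map y).prod * (b.map y).prod := by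
        rw [List.map_append, List.prod_append]
      rw [e1, e2, e3, hab] at *
      nlinarith [key]


lemma pairW_nil_word {d : ℕ} (x : List (Fin d → ℝ)) : pairW x [] = 1 := by
  simp [pairW]

lemma pairW_nil_seq {d : ℕ} (c : Letter d) (w : Word d) : pairW [] (c :: w) = 0 := by
  haveI : IsEmpty (Fin (w.length + 1) → Fin 0) := ⟨fun f => (f 0).elim0⟩
  simp [pairW]

lemma pairW_cons (d : ℕ) (y : Fin d → ℝ) (x : List (Fin d → ℝ)) (c : Letter d) (w : Word d) :
    pairW (y :: x) (c :: w) = pairW x (c :: w) + (c.map y).prod * pairW x w := by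
  rw [pairW]
  simp only [List.length_cons]
  rw [← Finset.sum_filter_add_sum_filter_not (Finset.univ.filter
      (fun f : Fin (w.length + 1) → Fin (x.length + 1) => ∀ a b, a < b → f a < f b))
      (fun f => f 0 = 0)]
  have h1 : ∑ f ∈ (Finset.univ.filter
      (fun f : Fin (w.length + 1) → Fin (x.length + 1) => ∀ a b, a < b → f a < f b)).filter
      (fun f => ¬ f 0 = 0),
      ∏ r : Fin (w.length + 1), (((c :: w).get r).map ((y :: x).get (f r))).prod
      = pairW x (c :: w) := by
    rw [pairW]
    simp only [List.length_cons]
    have pf : ∀ f ∈ (Finset.univ.filter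
        (fun f : Fin (w.length + 1) → Fin (x.length + 1) => ∀ a b, a < b → f a < f b)).filter
        (fun f => ¬ f 0 = 0), ∀ r, f r ≠ 0 := by
      intro f hf r
      simp only [Finset.mem_filter, Finset.mem_univ, true_and] at hf
      rcases eq_or_ne r 0 with h | h
      · rw [h]; exact hf.2
      · exact Fin.pos_iff_ne_zero.mp (lt_trans (Fin.pos_iff_ne_zero.mpr hf.2)
          (hf.1 0 r (Fin.pos_iff_ne_zero.mpr h)))
    apply Finset.sum_bij' (i := fun f hf => fun r => (f r).pred (pf f hf r))
      (j := fun g _ => fun r => (g r).succ)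
    case hi =>
      intro f hf
      have hf' := hf
      simp only [Finset.mem_filter, Finset.mem_univ, true_and] at hf ⊢
      intro a b hab
      exact Fin.pred_lt_pred_iff.mpr (hf.1 a b hab)
    case hj =>
      intro g hg
      simp only [Finset.mem_filter, Finset.mem_univ, true_and] at hg ⊢
      refine ⟨fun a b hab => ?_, Fin.succ_ne_zero _⟩
      exact Fin.succ_lt_succ_iff.mpr (hg a b hab)
    case left_neg => intro f hf; funext r; simp [Fin.succ_pred]
    case right_neg => intro g hg; funext r; simp [Fin.pred_succ]
    case h =>
      intro f hf
      apply Finset.prod_congr rfl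
      intro r _
      simp only []
      conv_lhs => rw [← Fin.succ_pred (f r) (pf f hf r)]
      rfl
  have h2 : ∑ f ∈ (Finset.univ.filter
      (fun f : Fin (w.length + 1) → Fin (x.length + 1) => ∀ a b, a < b → f a < f b)).filter
      (fun f => f 0 = 0),
      ∏ r : Fin (w.length + 1), (((c :: w).get r).map ((y :: x).get (f r))).prod
      = (c.map y).prod * pairW x w := by
    rw [pairW, Finset.mul_sum]
    have pf : ∀ f ∈ (Finset.univ.filter
        (fun f : Fin (w.length + 1) → Fin (x.length + 1) => ∀ a b, a < b → f a < f b)).filter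
        (fun f => f 0 = 0), ∀ r : Fin w.length, f r.succ ≠ 0 := by
      intro f hf r
      simp only [Finset.mem_filter, Finset.mem_univ, true_and] at hf
      have : f 0 < f r.succ := hf.1 0 r.succ (Fin.succ_pos r)
      rw [hf.2] at this
      exact Fin.pos_iff_ne_zero.mp this
    apply Finset.sum_bij' (i := fun f hf => fun r => (f r.succ).pred (pf f hf r))
      (j := fun g _ => Fin.cons 0 (fun r => (g r).succ))
    case hi =>
      intro f hf
      have hf' := hf
      simp only [Finset.mem_filter, Finset.mem_univ, true_and] at hf ⊢
      intro a b hab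
      exact Fin.pred_lt_pred_iff.mpr (hf.1 a.succ b.succ (Fin.succ_lt_succ_iff.mpr hab))
    case hj =>
      intro g hg
      simp only [Finset.mem_filter, Finset.mem_univ, true_and] at hg ⊢
      refine ⟨fun a b hab => ?_, Fin.cons_zero _ _⟩
      induction a using Fin.cases with
      | zero =>
        induction b using Fin.cases with
        | zero => exact absurd hab (lt_irrefl _)
        | succ b' => simp only [Fin.cons_zero, Fin.cons_succ]; exact Fin.succ_pos _
      | succ a' =>
        induction b using Fin.cases with
        | zero => exact absurd hab (by simp)
        | succ b' =>
          simp only [Fin.cons_succ]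
          exact Fin.succ_lt_succ_iff.mpr (hg a' b' (Fin.succ_lt_succ_iff.mp hab))
    case left_neg =>
      intro f hf
      have hf' := hf
      simp only [Finset.mem_filter, Finset.mem_univ, true_and] at hf'
      funext r
      induction r using Fin.cases with
      | zero => simp [Fin.cons_zero, hf'.2.symm]
      | succ r' => simp [Fin.cons_succ, Fin.succ_pred]
    case right_neg =>
      intro g hg
      funext r
      simp [Fin.cons_succ, Fin.pred_succ]
    case h =>
      intro f hf
      have hf' := hf
      simp only [Finset.mem_filter, Finset.mem_univ, true_and] at hf'
      rw [Fin.prod_univ_succ]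
      congr 1
      · rw [hf'.2]
        rfl
      · apply Finset.prod_congr rfl
        intro r _
        simp only []
        conv_lhs => rw [← Fin.succ_pred (f r.succ) (pf f hf r)]
        rfl
  rw [h1, h2]
  ring


lemma pairW_eq_Q {d : ℕ} : ∀ (x : List (Fin d → ℝ)) (w : Word d), pairW x w = Q x w := by
  intro x
  induction x with
  | nil =>
    intro w
    cases w with
    | nil => rw [pairW_nil_word, Q_nil_word]
    | cons c w' => rw [pairW_nil_seq]; rfl
  | cons y xs ih =>
    intro w
    cases w with
    | nil => rw [pairW_nil_word, Q_nil_word]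
    | cons c w' => rw [pairW_cons, Q_cons, ih, ih]

/-- The quasi-shuffle product identity: for words ℓ₁, ℓ₂ in basis vectors,
⟨ℓ₁, Φ(x)⟩ · ⟨ℓ₂, Φ(x)⟩ = ⟨ℓ₁ ⋆ ℓ₂, Φ(x^⋆)⟩. -/
theorem stmt18 (d : ℕ) (x : List (Fin d → ℝ)) (w1 w2 : List (Fin d)) :
    pairW x (w1.map (fun i => [i])) * pairW x (w2.map (fun i => [i])) =
      ((qsh (w1.map (fun i => [i])) (w2.map (fun i => [i]))).map
        (fun w => pairW x w)).sum := by
  have hQ : ∀ u : Word d, pairW x u.reverse = Q x.reverse u := by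
    intro u
    rw [pairW_eq_Q]
    have := Q_rev x.reverse u
    rw [List.reverse_reverse] at this
    rw [← this]
  calc pairW x (w1.map (fun i => [i])) * pairW x (w2.map (fun i => [i]))
      = Q x.reverse ((w1.map (fun i => [i])).reverse)
        * Q x.reverse ((w2.map (fun i => [i])).reverse) := by
        rw [pairW_eq_Q, pairW_eq_Q, Q_rev, Q_rev]
    _ = ((qshRev ((w1.map (fun i => [i])).reverse) ((w2.map (fun i => [i])).reverse)).map
          (fun w => Q x.reverse w)).sum := (main_id _ _ _).symm
    _ = ((qsh (w1.map (fun i => [i])) (w2.map (fun i => [i]))).map (fun w => pairW x w)).sum := by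
        rw [qsh, List.map_map]
        apply congrArg
        apply List.map_congr_left
        intro u _
        simp only [Function.comp_apply]
        rw [hQ u]
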